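/- (Iterated quasi-formal shifts) Let x : ℕ → ℝ be coefficients of a convergent formal power series and let s, t ∈ ℝ. Then for every n, ∑_{m=n}^∞ C(m,n) (∑_{l=m}^∞ C(l,m) x_l s^{l−m}) t^{m−n} = ∑_{l=n}^∞ C(l,n) x_l (s+t)^{l−n}, i.e. shifting by s and then by t equals shifting by s+t; all the series involved converge absolutely. -/

import Mathlib

open Filter Topology Finset

private lemma my_choose_le_two_pow (m n : ℕ) : m.choose n ≤ 2 ^ m := by
  rcases le_or_gt n m with h | h
  · calc m.choose n ≤ ∑ i ∈ Finset.range (m + 1), m.choose i :=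
        Finset.single_le_sum (f := fun i => m.choose i) (fun _ _ => Nat.zero_le _)
          (Finset.mem_range.mpr (Nat.lt_succ_of_le h))
    _ = 2 ^ m := Nat.sum_range_choose m
  · simp [Nat.choose_eq_zero_of_lt h]

private lemma my_choose_id (n i k : ℕ) : (n + k).choose (n + i) * (n + i).choose n
    = (n + k).choose n * k.choose i := by
  rcases le_or_gt i k with h | h
  · have := Nat.choose_mul (n := n + k) (Nat.le_add_right n i)
    simpa using this
  · rw [Nat.choose_eq_zero_of_lt (by omega), Nat.choose_eq_zero_of_lt h, zero_mul, mul_zero]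

private lemma my_key (x : ℕ → ℝ)
    (hx : ∀ c : ℝ, 0 < c → Tendsto (fun n => x n * c ^ n) atTop (𝓝 0))
    (n : ℕ) (c : ℝ) (hc : 0 ≤ c) :
    Summable fun k : ℕ => ((n + k).choose n : ℝ) * |x (n + k)| * c ^ k := by
  set d : ℝ := c + 1 with hd
  have hd0 : (0 : ℝ) < d := by positivity
  have h4 := (hx (4 * d) (by positivity)).abs
  have hb : BddAbove (Set.range fun m => |x m * (4 * d) ^ m|) := h4.bddAbove_range
  set M := sSup (Set.range fun m => |x m * (4 * d) ^ m|) with hM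
  have hMle : ∀ m, |x m| * (4 * d) ^ m ≤ M := by
    intro m
    have h : |x m * (4 * d) ^ m| ≤ M := le_csSup hb ⟨m, rfl⟩
    rwa [abs_mul, abs_pow, abs_of_pos (by positivity : (0:ℝ) < 4 * d)] at h
  have hM0 : 0 ≤ M := le_trans (by positivity) (hMle 0)
  apply Summable.of_nonneg_of_le (fun k => by positivity)
    (fun k => ?_) (summable_geometric_two.mul_left (M / (2 ^ n * d ^ n)))
  calc ((n + k).choose n : ℝ) * |x (n + k)| * c ^ k
      ≤ 2 ^ (n + k) * |x (n + k)| * d ^ k := by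
        gcongr
        · exact_mod_cast my_choose_le_two_pow (n + k) n
        · linarith
    _ ≤ 2 ^ (n + k) * (M / (4 * d) ^ (n + k)) * d ^ k := by
        gcongr
        rw [le_div_iff₀ (by positivity)]
        exact hMle (n + k)
    _ = M / (2 ^ n * d ^ n) * (1 / 2) ^ k := by
        have h2 : (4 : ℝ) ^ (n + k) = 2 ^ (n + k) * 2 ^ (n + k) := by
          rw [← mul_pow]; norm_num
        have h4d : (4 * d : ℝ) ^ (n + k) = 2 ^ (n + k) * (2 ^ n * 2 ^ k) * (d ^ n * d ^ k) := by
          rw [mul_pow, h2, pow_add, pow_add]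
        rw [h4d]
        field_simp
        rw [mul_assoc, ← mul_pow]; norm_num

private lemma my_sum_antidiag (n k : ℕ) (y : ℕ → ℝ) (a b : ℝ) :
    ∑ p ∈ Finset.HasAntidiagonal.antidiagonal k, ((n + p.1).choose n : ℝ) *
        (((n + p.1 + p.2).choose (n + p.1) : ℝ) * y (n + p.1 + p.2) * a ^ p.2) * b ^ p.1
      = ((n + k).choose n : ℝ) * y (n + k) * (b + a) ^ k := by
  rw [Finset.Nat.sum_antidiagonal_eq_sum_range_succ_mk, add_pow, Finset.mul_sum]
  apply Finset.sum_congr rfl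
  intro i hi
  dsimp only
  have hik : i ≤ k := Nat.lt_succ_iff.mp (Finset.mem_range.mp hi)
  have hnk : n + i + (k - i) = n + k := by omega
  rw [hnk]
  have hcc : ((n + k).choose (n + i) : ℝ) * ((n + i).choose n : ℝ)
      = ((n + k).choose n : ℝ) * (k.choose i : ℝ) := by
    exact_mod_cast congrArg (Nat.cast : ℕ → ℝ) (my_choose_id n i k)
  calc ((n + i).choose n : ℝ) * (((n + k).choose (n + i) : ℝ) * y (n + k) * a ^ (k - i)) * b ^ i
      = ((n + k).choose (n + i) : ℝ) * ((n + i).choose n : ℝ) * (y (n + k) * a ^ (k - i) * b ^ i) := by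
        ring
    _ = ((n + k).choose n : ℝ) * (k.choose i : ℝ) * (y (n + k) * a ^ (k - i) * b ^ i) := by
        rw [hcc]
    _ = ((n + k).choose n : ℝ) * y (n + k) * (b ^ i * a ^ (k - i) * (k.choose i : ℝ)) := by
        ring

/-- Iterated quasi-formal shifts: shifting a convergent formal power series by s and
then by t equals shifting it by s + t; all series involved converge absolutely. -/
theorem iterated_shifts (x : ℕ → ℝ)
    (hx : ∀ c : ℝ, 0 < c → Tendsto (fun n => x n * c ^ n) atTop (𝓝 0))
    (s t : ℝ) (w : ℕ → ℝ)
    (hw : ∀ m : ℕ, w m = ∑' l : ℕ, ((m + l).choose m : ℝ) * x (m + l) * s ^ l) :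
    (∀ m : ℕ, Summable fun l : ℕ => |((m + l).choose m : ℝ) * x (m + l) * s ^ l|) ∧
    (∀ n : ℕ, Summable fun m : ℕ => |((n + m).choose n : ℝ) * w (n + m) * t ^ m|) ∧
    (∀ n : ℕ, Summable fun l : ℕ => |((n + l).choose n : ℝ) * x (n + l) * (s + t) ^ l|) ∧
    ∀ n : ℕ,
      (∑' m : ℕ, ((n + m).choose n : ℝ) * w (n + m) * t ^ m) =
        ∑' l : ℕ, ((n + l).choose n : ℝ) * x (n + l) * (s + t) ^ l := by
  have habs : ∀ (m : ℕ) (c : ℝ),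
      Summable fun l : ℕ => |((m + l).choose m : ℝ) * x (m + l) * c ^ l| := by
    intro m c
    have h := my_key x hx m |c| (abs_nonneg c)
    apply Summable.congr h
    intro l
    rw [abs_mul, abs_mul, abs_pow, Nat.abs_cast]
  have main : ∀ n : ℕ,
      (Summable fun m : ℕ => |((n + m).choose n : ℝ) * w (n + m) * t ^ m|) ∧
      (∑' m : ℕ, ((n + m).choose n : ℝ) * w (n + m) * t ^ m) =
        ∑' l : ℕ, ((n + l).choose n : ℝ) * x (n + l) * (s + t) ^ l := by
    intro n
    set F : ℕ × ℕ → ℝ := fun p =>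
      ((n + p.1).choose n : ℝ) *
        (((n + p.1 + p.2).choose (n + p.1) : ℝ) * x (n + p.1 + p.2) * s ^ p.2) * t ^ p.1 with hF
    have hFabsval : ∀ p : ℕ × ℕ, |F p| =
        ((n + p.1).choose n : ℝ) *
          (((n + p.1 + p.2).choose (n + p.1) : ℝ) * |x (n + p.1 + p.2)| * |s| ^ p.2) * |t| ^ p.1 := by
      intro p
      simp only [hF, abs_mul, abs_pow, Nat.abs_cast]
    have hFabs : Summable fun p : ℕ × ℕ => |F p| := by
      rw [← Finset.HasAntidiagonal.sigmaAntidiagonalEquivProd.summable_iff]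
      apply (summable_sigma_of_nonneg (fun _ => abs_nonneg _)).mpr
      refine ⟨fun k => (hasSum_fintype _).summable, ?_⟩
      have hkey := my_key x hx n (|t| + |s|) (by positivity)
      refine Summable.congr hkey fun k => ?_
      have h1 : ((n + k).choose n : ℝ) * |x (n + k)| * (|t| + |s|) ^ k
          = ∑ p ∈ Finset.HasAntidiagonal.antidiagonal k, |F p| := by
        rw [← my_sum_antidiag n k (fun m => |x m|) |s| |t|]
        exact Finset.sum_congr rfl fun p _ => (hFabsval p).symm
      rw [h1]
      exact (Finset.tsum_subtype (Finset.HasAntidiagonal.antidiagonal k) (fun q => |F q|)).symm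
    have hFsum : Summable F := by
      apply Summable.of_norm
      simpa [Real.norm_eq_abs] using hFabs
    have hprod := (summable_prod_of_nonneg (fun p => abs_nonneg (F p))).mp hFabs
    have hwm : ∀ m : ℕ, ((n + m).choose n : ℝ) * w (n + m) * t ^ m = ∑' l, F (m, l) := by
      intro m
      rw [hw (n + m), ← tsum_mul_left, ← tsum_mul_right]
    have hrow : ∀ m : ℕ, Summable fun l => F (m, l) := by
      intro m
      apply Summable.of_norm
      simpa [Real.norm_eq_abs] using hprod.1 m
    constructor
    · apply Summable.of_nonneg_of_le (fun m => abs_nonneg _) (fun m => ?_) hprod.2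
      rw [hwm m]
      calc |∑' l, F (m, l)| = ‖∑' l, F (m, l)‖ := (Real.norm_eq_abs _).symm
        _ ≤ ∑' l, ‖F (m, l)‖ := norm_tsum_le_tsum_norm (by
              simpa [Real.norm_eq_abs] using hprod.1 m)
        _ = ∑' l, |F (m, l)| := by simp [Real.norm_eq_abs]
    · have hsig : Summable fun σ : Σ k : ℕ, Finset.HasAntidiagonal.antidiagonal k =>
          F (Finset.HasAntidiagonal.sigmaAntidiagonalEquivProd σ) :=
        Finset.HasAntidiagonal.sigmaAntidiagonalEquivProd.summable_iff.mpr hFsum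
      calc (∑' m : ℕ, ((n + m).choose n : ℝ) * w (n + m) * t ^ m)
          = ∑' m : ℕ, ∑' l : ℕ, F (m, l) := by
            exact tsum_congr fun m => hwm m
        _ = ∑' p : ℕ × ℕ, F p := (Summable.tsum_prod' hFsum hrow).symm
        _ = ∑' σ : Σ k : ℕ, Finset.HasAntidiagonal.antidiagonal k, F (Finset.HasAntidiagonal.sigmaAntidiagonalEquivProd σ) :=
            (Finset.HasAntidiagonal.sigmaAntidiagonalEquivProd.tsum_eq F).symm
        _ = ∑' k : ℕ, ∑' p : Finset.HasAntidiagonal.antidiagonal k, F (Finset.HasAntidiagonal.sigmaAntidiagonalEquivProd ⟨k, p⟩) :=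
            Summable.tsum_sigma' (fun k => (hasSum_fintype _).summable) hsig
        _ = ∑' k : ℕ, ∑ p ∈ Finset.HasAntidiagonal.antidiagonal k, F p := by
            refine tsum_congr fun k => ?_
            exact Finset.tsum_subtype (Finset.HasAntidiagonal.antidiagonal k) (fun q => F q)
        _ = ∑' l : ℕ, ((n + l).choose n : ℝ) * x (n + l) * (s + t) ^ l := by
            refine tsum_congr fun k => ?_
            rw [my_sum_antidiag n k x s t, add_comm t s]
  exact ⟨fun m => habs m s, fun n => (main n).1, fun n => habs n (s + t), fun n => (main n).2⟩
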